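/- Let Γ be a set of formulas, α an atomic mapping for Γ^Sub, and U the simulation base for α. Then for every formula φ ∈ Γ^Sub, every base B with B ⊇ U, and each sign * ∈ {+,−}: ⊩*_B φ if and only if ⊢*_B p^φ. -/
import Mathlib


/-- Signs: `pos` for proof/assertion, `neg` for refutation/rejection. -/
inductive Sign where
  | pos
  | neg
deriving DecidableEq

/-- The dual of a sign. -/
def Sign.dual : Sign → Sign
  | .pos => .neg
  | .neg => .pos

/-- Formulas of the bilateral logic 2Int. -/
inductive Form where
  | atom : ℕ → Form
  | bot : Form
  | top : Form
  | and : Form → Form → Form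
  | or : Form → Form → Form
  | imp : Form → Form → Form
  | coimp : Form → Form → Form
deriving DecidableEq

/-- A premise of an atomic rule: the sign required (proof or refutation), the premise atom,
and the sets of dischargeable atomic proof assumptions and refutation assumptions. -/
structure Premise where
  sign : Sign
  concl : ℕ
  dischargePf : Set ℕ
  dischargeRf : Set ℕ

/-- An atomic rule: a list of premises, a marking as proof (`pos`) or refutation (`neg`) rule,
and an atomic conclusion. -/
structure AtomicRule where
  prems : List Premise
  sign : Sign
  concl : ℕ

/-- A bilateral atomic system (base) is a set of atomic rules. -/
abbrev Base := Set AtomicRule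

/-- `AtDeriv B s Γ Δ p` formalizes `Γ;Δ ⊢^s_B p`: there is a deduction in `B` of the atom `p`
whose open atomic proof assumptions are contained in `Γ` and open atomic refutation
assumptions in `Δ`, consisting of a single assumption of sign `s` or ending with a rule of
sign `s`. -/
inductive AtDeriv (B : Base) : Sign → Set ℕ → Set ℕ → ℕ → Prop
  | hypPos {Γ Δ : Set ℕ} {p : ℕ} : p ∈ Γ → AtDeriv B .pos Γ Δ p
  | hypNeg {Γ Δ : Set ℕ} {p : ℕ} : p ∈ Δ → AtDeriv B .neg Γ Δ p
  | app {Γ Δ : Set ℕ} {R : AtomicRule} (hR : R ∈ B)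
      (h : ∀ pr ∈ R.prems,
        AtDeriv B pr.sign (Γ ∪ pr.dischargePf) (Δ ∪ pr.dischargeRf) pr.concl) :
      AtDeriv B R.sign Γ Δ R.concl

/-- Bilateral validity (support) `⊩^s_B φ`, by recursion on the formula. -/
def Supp : Form → Base → Sign → Prop
  | .atom p, B, s => AtDeriv B s ∅ ∅ p
  | .bot, B, .pos => ∀ p : ℕ, AtDeriv B .pos ∅ ∅ p ∧ AtDeriv B .neg ∅ ∅ p
  | .bot, _, .neg => True
  | .top, _, .pos => True
  | .top, B, .neg => ∀ p : ℕ, AtDeriv B .pos ∅ ∅ p ∧ AtDeriv B .neg ∅ ∅ p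
  | .and φ ψ, B, .pos => Supp φ B .pos ∧ Supp ψ B .pos
  | .and φ ψ, B, .neg => ∀ C : Base, B ⊆ C → ∀ p : ℕ,
      (((∀ D : Base, C ⊆ D → Supp φ D .neg → AtDeriv D .pos ∅ ∅ p) ∧
        (∀ D : Base, C ⊆ D → Supp ψ D .neg → AtDeriv D .pos ∅ ∅ p)) →
        AtDeriv C .pos ∅ ∅ p) ∧
      (((∀ D : Base, C ⊆ D → Supp φ D .neg → AtDeriv D .neg ∅ ∅ p) ∧
        (∀ D : Base, C ⊆ D → Supp ψ D .neg → AtDeriv D .neg ∅ ∅ p)) →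
        AtDeriv C .neg ∅ ∅ p)
  | .or φ ψ, B, .pos => ∀ C : Base, B ⊆ C → ∀ p : ℕ,
      (((∀ D : Base, C ⊆ D → Supp φ D .pos → AtDeriv D .pos ∅ ∅ p) ∧
        (∀ D : Base, C ⊆ D → Supp ψ D .pos → AtDeriv D .pos ∅ ∅ p)) →
        AtDeriv C .pos ∅ ∅ p) ∧
      (((∀ D : Base, C ⊆ D → Supp φ D .pos → AtDeriv D .neg ∅ ∅ p) ∧
        (∀ D : Base, C ⊆ D → Supp ψ D .pos → AtDeriv D .neg ∅ ∅ p)) →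
        AtDeriv C .neg ∅ ∅ p)
  | .or φ ψ, B, .neg => Supp φ B .neg ∧ Supp ψ B .neg
  | .imp φ ψ, B, .pos => ∀ C : Base, B ⊆ C → Supp φ C .pos → Supp ψ C .pos
  | .imp φ ψ, B, .neg => Supp φ B .pos ∧ Supp ψ B .neg
  | .coimp φ ψ, B, .pos => Supp φ B .pos ∧ Supp ψ B .neg
  | .coimp φ ψ, B, .neg => ∀ C : Base, B ⊆ C → Supp ψ C .neg → Supp φ C .neg

/-- Subformulas of a formula. -/
def Form.subf : Form → Set Form
  | .atom p => {.atom p}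
  | .bot => {.bot}
  | .top => {.top}
  | .and φ ψ => insert (φ.and ψ) (φ.subf ∪ ψ.subf)
  | .or φ ψ => insert (φ.or ψ) (φ.subf ∪ ψ.subf)
  | .imp φ ψ => insert (φ.imp ψ) (φ.subf ∪ ψ.subf)
  | .coimp φ ψ => insert (φ.coimp ψ) (φ.subf ∪ ψ.subf)

/-- `Γ^Sub`: all subformulas of formulas in `Γ`. -/
def subSet (Γ : Set Form) : Set Form := ⋃ φ ∈ Γ, φ.subf

/-- premise requiring a proof of `a`, no discharge -/
def pp (a : ℕ) : Premise := ⟨.pos, a, ∅, ∅⟩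
/-- premise requiring a refutation of `a`, no discharge -/
def pn (a : ℕ) : Premise := ⟨.neg, a, ∅, ∅⟩

/-- The rules of the simulation base for the atomic mapping `α` on `S`. -/
inductive SimRule (S : Set Form) (α : Form → ℕ) : AtomicRule → Prop
  | impIpos {φ ψ : Form} : φ.imp ψ ∈ S →
      SimRule S α ⟨[⟨.pos, α ψ, {α φ}, ∅⟩], .pos, α (φ.imp ψ)⟩
  | impEpos {φ ψ : Form} : φ.imp ψ ∈ S →
      SimRule S α ⟨[pp (α (φ.imp ψ)), pp (α φ)], .pos, α ψ⟩
  | impIneg {φ ψ : Form} : φ.imp ψ ∈ S →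
      SimRule S α ⟨[pp (α φ), pn (α ψ)], .neg, α (φ.imp ψ)⟩
  | impE1neg {φ ψ : Form} : φ.imp ψ ∈ S →
      SimRule S α ⟨[pn (α (φ.imp ψ))], .pos, α φ⟩
  | impE2neg {φ ψ : Form} : φ.imp ψ ∈ S →
      SimRule S α ⟨[pn (α (φ.imp ψ))], .neg, α ψ⟩
  | coimpIpos {φ ψ : Form} : φ.coimp ψ ∈ S →
      SimRule S α ⟨[pp (α φ), pn (α ψ)], .pos, α (φ.coimp ψ)⟩
  | coimpE1pos {φ ψ : Form} : φ.coimp ψ ∈ S →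
      SimRule S α ⟨[pp (α (φ.coimp ψ))], .pos, α φ⟩
  | coimpE2pos {φ ψ : Form} : φ.coimp ψ ∈ S →
      SimRule S α ⟨[pp (α (φ.coimp ψ))], .neg, α ψ⟩
  | coimpIneg {φ ψ : Form} : φ.coimp ψ ∈ S →
      SimRule S α ⟨[⟨.neg, α φ, ∅, {α ψ}⟩], .neg, α (φ.coimp ψ)⟩
  | coimpEneg {φ ψ : Form} : φ.coimp ψ ∈ S →
      SimRule S α ⟨[pn (α (φ.coimp ψ)), pn (α ψ)], .neg, α φ⟩
  | andIpos {φ ψ : Form} : φ.and ψ ∈ S →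
      SimRule S α ⟨[pp (α φ), pp (α ψ)], .pos, α (φ.and ψ)⟩
  | andE1pos {φ ψ : Form} : φ.and ψ ∈ S →
      SimRule S α ⟨[pp (α (φ.and ψ))], .pos, α φ⟩
  | andE2pos {φ ψ : Form} : φ.and ψ ∈ S →
      SimRule S α ⟨[pp (α (φ.and ψ))], .pos, α ψ⟩
  | andI1neg {φ ψ : Form} : φ.and ψ ∈ S →
      SimRule S α ⟨[pn (α φ)], .neg, α (φ.and ψ)⟩
  | andI2neg {φ ψ : Form} : φ.and ψ ∈ S →
      SimRule S α ⟨[pn (α ψ)], .neg, α (φ.and ψ)⟩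
  | andEneg1 {φ ψ : Form} (q : ℕ) : φ.and ψ ∈ S →
      SimRule S α ⟨[pn (α (φ.and ψ)), ⟨.pos, q, ∅, {α φ}⟩, ⟨.pos, q, ∅, {α ψ}⟩], .pos, q⟩
  | andEneg2 {φ ψ : Form} (q : ℕ) : φ.and ψ ∈ S →
      SimRule S α ⟨[pn (α (φ.and ψ)), ⟨.neg, q, ∅, {α φ}⟩, ⟨.neg, q, ∅, {α ψ}⟩], .neg, q⟩
  | orI1pos {φ ψ : Form} : φ.or ψ ∈ S →
      SimRule S α ⟨[pp (α φ)], .pos, α (φ.or ψ)⟩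
  | orI2pos {φ ψ : Form} : φ.or ψ ∈ S →
      SimRule S α ⟨[pp (α ψ)], .pos, α (φ.or ψ)⟩
  | orEpos1 {φ ψ : Form} (q : ℕ) : φ.or ψ ∈ S →
      SimRule S α ⟨[pp (α (φ.or ψ)), ⟨.pos, q, {α φ}, ∅⟩, ⟨.pos, q, {α ψ}, ∅⟩], .pos, q⟩
  | orEpos2 {φ ψ : Form} (q : ℕ) : φ.or ψ ∈ S →
      SimRule S α ⟨[pp (α (φ.or ψ)), ⟨.neg, q, {α φ}, ∅⟩, ⟨.neg, q, {α ψ}, ∅⟩], .neg, q⟩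
  | orIneg {φ ψ : Form} : φ.or ψ ∈ S →
      SimRule S α ⟨[pn (α φ), pn (α ψ)], .neg, α (φ.or ψ)⟩
  | orE1neg {φ ψ : Form} : φ.or ψ ∈ S →
      SimRule S α ⟨[pn (α (φ.or ψ))], .neg, α φ⟩
  | orE2neg {φ ψ : Form} : φ.or ψ ∈ S →
      SimRule S α ⟨[pn (α (φ.or ψ))], .neg, α ψ⟩
  | topIpos : Form.top ∈ S → SimRule S α ⟨[], .pos, α .top⟩
  | botIneg : Form.bot ∈ S → SimRule S α ⟨[], .neg, α .bot⟩
  | botEpos1 (q : ℕ) : Form.bot ∈ S → SimRule S α ⟨[pp (α .bot)], .pos, q⟩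
  | botEpos2 (q : ℕ) : Form.bot ∈ S → SimRule S α ⟨[pp (α .bot)], .neg, q⟩
  | topEneg1 (q : ℕ) : Form.top ∈ S → SimRule S α ⟨[pn (α .top)], .pos, q⟩
  | topEneg2 (q : ℕ) : Form.top ∈ S → SimRule S α ⟨[pn (α .top)], .neg, q⟩

/-- The simulation base for `α` on `S`. -/
def simBase (S : Set Form) (α : Form → ℕ) : Base := {R | SimRule S α R}

/-! ### Auxiliary lemmas -/

lemma AtDeriv.mono {B C : Base} (hBC : B ⊆ C) {s : Sign} {Γ Δ : Set ℕ} {p : ℕ}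
    (h : AtDeriv B s Γ Δ p) : AtDeriv C s Γ Δ p := by
  induction h with
  | hypPos h => exact .hypPos h
  | hypNeg h => exact .hypNeg h
  | app hR h ih => exact .app (hBC hR) ih

lemma AtDeriv.weaken {B : Base} {s : Sign} {Γ Δ : Set ℕ} {p : ℕ}
    (h : AtDeriv B s Γ Δ p) : ∀ {Γ' Δ' : Set ℕ}, Γ ⊆ Γ' → Δ ⊆ Δ' → AtDeriv B s Γ' Δ' p := by
  induction h with
  | hypPos h => intro _ _ hΓ _; exact .hypPos (hΓ h)
  | hypNeg h => intro _ _ _ hΔ; exact .hypNeg (hΔ h)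
  | app hR h ih =>
    intro Γ' Δ' hΓ hΔ
    exact .app hR fun pr hpr =>
      ih pr hpr (Set.union_subset_union hΓ subset_rfl) (Set.union_subset_union hΔ subset_rfl)

/-- An axiom rule: no premises, conclusion `q` with sign `s`. -/
def axR (s : Sign) (q : ℕ) : AtomicRule := ⟨[], s, q⟩

lemma axDeriv {B : Base} {s : Sign} {q : ℕ} {Γ Δ : Set ℕ} :
    AtDeriv (insert (axR s q) B) s Γ Δ q :=
  AtDeriv.app (R := axR s q) (Set.mem_insert _ _) (by intro pr h; simp [axR] at h)

lemma removeAxPos {B : Base} {t : Sign} {Γ Δ : Set ℕ} {p q : ℕ}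
    (h : AtDeriv (insert (axR .pos q) B) t Γ Δ p) : AtDeriv B t (insert q Γ) Δ p := by
  induction h with
  | hypPos h => exact .hypPos (Set.mem_insert_of_mem _ h)
  | hypNeg h => exact .hypNeg h
  | @app Γ Δ R hR h ih =>
    rcases hR with hR | hR
    · subst hR; exact .hypPos (Set.mem_insert _ _)
    · refine .app hR fun pr hpr => ?_
      rw [Set.insert_union]
      exact ih pr hpr

lemma removeAxNeg {B : Base} {t : Sign} {Γ Δ : Set ℕ} {p q : ℕ}
    (h : AtDeriv (insert (axR .neg q) B) t Γ Δ p) : AtDeriv B t Γ (insert q Δ) p := by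
  induction h with
  | hypPos h => exact .hypPos h
  | hypNeg h => exact .hypNeg (Set.mem_insert_of_mem _ h)
  | @app Γ Δ R hR h ih =>
    rcases hR with hR | hR
    · subst hR; exact .hypNeg (Set.mem_insert _ _)
    · refine .app hR fun pr hpr => ?_
      rw [Set.insert_union]
      exact ih pr hpr

lemma subf_self (φ : Form) : φ ∈ φ.subf := by
  cases φ <;> simp [Form.subf]

lemma subf_trans : ∀ θ ψ : Form, ψ ∈ θ.subf → ψ.subf ⊆ θ.subf := by
  intro θ
  induction θ with
  | atom p => intro ψ h; simp [Form.subf] at h; subst h; simp [Form.subf]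
  | bot => intro ψ h; simp [Form.subf] at h; subst h; simp [Form.subf]
  | top => intro ψ h; simp [Form.subf] at h; subst h; simp [Form.subf]
  | and a b iha ihb =>
    intro ψ h
    simp only [Form.subf, Set.mem_insert_iff, Set.mem_union] at h
    rcases h with rfl | h | h
    · exact subset_rfl
    · exact (iha ψ h).trans ((Set.subset_union_left).trans (Set.subset_insert _ _))
    · exact (ihb ψ h).trans ((Set.subset_union_right).trans (Set.subset_insert _ _))
  | or a b iha ihb =>
    intro ψ h
    simp only [Form.subf, Set.mem_insert_iff, Set.mem_union] at h
    rcases h with rfl | h | h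
    · exact subset_rfl
    · exact (iha ψ h).trans ((Set.subset_union_left).trans (Set.subset_insert _ _))
    · exact (ihb ψ h).trans ((Set.subset_union_right).trans (Set.subset_insert _ _))
  | imp a b iha ihb =>
    intro ψ h
    simp only [Form.subf, Set.mem_insert_iff, Set.mem_union] at h
    rcases h with rfl | h | h
    · exact subset_rfl
    · exact (iha ψ h).trans ((Set.subset_union_left).trans (Set.subset_insert _ _))
    · exact (ihb ψ h).trans ((Set.subset_union_right).trans (Set.subset_insert _ _))
  | coimp a b iha ihb =>
    intro ψ h
    simp only [Form.subf, Set.mem_insert_iff, Set.mem_union] at h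
    rcases h with rfl | h | h
    · exact subset_rfl
    · exact (iha ψ h).trans ((Set.subset_union_left).trans (Set.subset_insert _ _))
    · exact (ihb ψ h).trans ((Set.subset_union_right).trans (Set.subset_insert _ _))

lemma subSet_closed {Γ : Set Form} : ∀ φ ∈ subSet Γ, φ.subf ⊆ subSet Γ := by
  intro φ hφ
  simp only [subSet, Set.mem_iUnion] at hφ ⊢
  obtain ⟨θ, hθ, hsub⟩ := hφ
  intro χ hχ
  exact Set.mem_biUnion hθ (subf_trans θ φ hsub hχ)

lemma app0 {B : Base} {s : Sign} {c : ℕ}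
    (hR : (⟨[], s, c⟩ : AtomicRule) ∈ B) : AtDeriv B s ∅ ∅ c :=
  AtDeriv.app (R := ⟨[], s, c⟩) hR (by intro pr hpr; simp at hpr)

lemma app1 {B : Base} {s s₁ : Sign} {c c₁ : ℕ} {G₁ D₁ : Set ℕ}
    (hR : (⟨[⟨s₁, c₁, G₁, D₁⟩], s, c⟩ : AtomicRule) ∈ B)
    (h₁ : AtDeriv B s₁ G₁ D₁ c₁) : AtDeriv B s ∅ ∅ c := by
  refine AtDeriv.app (R := ⟨[⟨s₁, c₁, G₁, D₁⟩], s, c⟩) hR ?_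
  intro pr hpr
  simp only [List.mem_singleton] at hpr
  subst hpr
  simpa using h₁

lemma app2 {B : Base} {s s₁ s₂ : Sign} {c c₁ c₂ : ℕ} {G₁ D₁ G₂ D₂ : Set ℕ}
    (hR : (⟨[⟨s₁, c₁, G₁, D₁⟩, ⟨s₂, c₂, G₂, D₂⟩], s, c⟩ : AtomicRule) ∈ B)
    (h₁ : AtDeriv B s₁ G₁ D₁ c₁) (h₂ : AtDeriv B s₂ G₂ D₂ c₂) : AtDeriv B s ∅ ∅ c := by
  refine AtDeriv.app (R := ⟨[⟨s₁, c₁, G₁, D₁⟩, ⟨s₂, c₂, G₂, D₂⟩], s, c⟩) hR ?_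
  intro pr hpr
  simp only [List.mem_cons, List.not_mem_nil, or_false] at hpr
  rcases hpr with rfl | rfl
  · simpa using h₁
  · simpa using h₂

lemma app3 {B : Base} {s s₁ s₂ s₃ : Sign} {c c₁ c₂ c₃ : ℕ} {G₁ D₁ G₂ D₂ G₃ D₃ : Set ℕ}
    (hR : (⟨[⟨s₁, c₁, G₁, D₁⟩, ⟨s₂, c₂, G₂, D₂⟩, ⟨s₃, c₃, G₃, D₃⟩], s, c⟩ : AtomicRule) ∈ B)
    (h₁ : AtDeriv B s₁ G₁ D₁ c₁) (h₂ : AtDeriv B s₂ G₂ D₂ c₂)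
    (h₃ : AtDeriv B s₃ G₃ D₃ c₃) : AtDeriv B s ∅ ∅ c := by
  refine AtDeriv.app
    (R := ⟨[⟨s₁, c₁, G₁, D₁⟩, ⟨s₂, c₂, G₂, D₂⟩, ⟨s₃, c₃, G₃, D₃⟩], s, c⟩) hR ?_
  intro pr hpr
  simp only [List.mem_cons, List.not_mem_nil, or_false] at hpr
  rcases hpr with rfl | rfl | rfl
  · simpa using h₁
  · simpa using h₂
  · simpa using h₃

lemma simulation_main (S : Set Form) (α : Form → ℕ)
    (hcl : ∀ φ ∈ S, φ.subf ⊆ S)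
    (hatom : ∀ p : ℕ, Form.atom p ∈ S → α (Form.atom p) = p) :
    ∀ φ ∈ S, ∀ B : Base, simBase S α ⊆ B → ∀ s : Sign,
      (Supp φ B s ↔ AtDeriv B s ∅ ∅ (α φ)) := by
  intro φ
  induction φ with
  | atom p =>
    intro hmem B hB s
    rw [hatom p hmem]
    cases s <;> exact Iff.rfl
  | bot =>
    intro hmem B hB s
    cases s with
    | pos =>
      constructor
      · intro h; exact (h (α .bot)).1
      · intro h p
        exact ⟨app1 (hB (.botEpos1 p hmem)) h, app1 (hB (.botEpos2 p hmem)) h⟩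
    | neg =>
      constructor
      · intro _; exact app0 (hB (.botIneg hmem))
      · intro _; trivial
  | top =>
    intro hmem B hB s
    cases s with
    | pos =>
      constructor
      · intro _; exact app0 (hB (.topIpos hmem))
      · intro _; trivial
    | neg =>
      constructor
      · intro h; exact (h (α .top)).2
      · intro h p
        exact ⟨app1 (hB (.topEneg1 p hmem)) h, app1 (hB (.topEneg2 p hmem)) h⟩
  | and φ ψ ihφ ihψ =>
    intro hmem B hB s
    have hφS : φ ∈ S := hcl _ hmem (by simp [Form.subf, subf_self])
    have hψS : ψ ∈ S := hcl _ hmem (by simp [Form.subf, subf_self])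
    cases s with
    | pos =>
      show (Supp φ B .pos ∧ Supp ψ B .pos) ↔ _
      rw [ihφ hφS B hB .pos, ihψ hψS B hB .pos]
      constructor
      · rintro ⟨h1, h2⟩
        exact app2 (hB (.andIpos hmem)) h1 h2
      · intro h
        exact ⟨app1 (hB (.andE1pos hmem)) h, app1 (hB (.andE2pos hmem)) h⟩
    | neg =>
      constructor
      · intro h
        refine (h B Set.Subset.rfl (α (φ.and ψ))).2 ⟨?_, ?_⟩
        · intro D hBD hs
          exact app1 (hBD (hB (.andI1neg hmem))) ((ihφ hφS D (hB.trans hBD) .neg).mp hs)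
        · intro D hBD hs
          exact app1 (hBD (hB (.andI2neg hmem))) ((ihψ hψS D (hB.trans hBD) .neg).mp hs)
      · intro h C hBC p
        constructor
        · rintro ⟨h1, h2⟩
          refine app3 (hBC (hB (SimRule.andEneg1 p hmem))) (h.mono hBC) ?_ ?_
          · have hd := h1 _ (Set.subset_insert (axR .neg (α φ)) C)
              ((ihφ hφS _ ((hB.trans hBC).trans (Set.subset_insert _ _)) .neg).mpr axDeriv)
            simpa using removeAxNeg hd
          · have hd := h2 _ (Set.subset_insert (axR .neg (α ψ)) C)
              ((ihψ hψS _ ((hB.trans hBC).trans (Set.subset_insert _ _)) .neg).mpr axDeriv)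
            simpa using removeAxNeg hd
        · rintro ⟨h1, h2⟩
          refine app3 (hBC (hB (SimRule.andEneg2 p hmem))) (h.mono hBC) ?_ ?_
          · have hd := h1 _ (Set.subset_insert (axR .neg (α φ)) C)
              ((ihφ hφS _ ((hB.trans hBC).trans (Set.subset_insert _ _)) .neg).mpr axDeriv)
            simpa using removeAxNeg hd
          · have hd := h2 _ (Set.subset_insert (axR .neg (α ψ)) C)
              ((ihψ hψS _ ((hB.trans hBC).trans (Set.subset_insert _ _)) .neg).mpr axDeriv)
            simpa using removeAxNeg hd
  | or φ ψ ihφ ihψ =>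
    intro hmem B hB s
    have hφS : φ ∈ S := hcl _ hmem (by simp [Form.subf, subf_self])
    have hψS : ψ ∈ S := hcl _ hmem (by simp [Form.subf, subf_self])
    cases s with
    | pos =>
      constructor
      · intro h
        refine (h B Set.Subset.rfl (α (φ.or ψ))).1 ⟨?_, ?_⟩
        · intro D hBD hs
          exact app1 (hBD (hB (.orI1pos hmem))) ((ihφ hφS D (hB.trans hBD) .pos).mp hs)
        · intro D hBD hs
          exact app1 (hBD (hB (.orI2pos hmem))) ((ihψ hψS D (hB.trans hBD) .pos).mp hs)
      · intro h C hBC p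
        constructor
        · rintro ⟨h1, h2⟩
          refine app3 (hBC (hB (SimRule.orEpos1 p hmem))) (h.mono hBC) ?_ ?_
          · have hd := h1 _ (Set.subset_insert (axR .pos (α φ)) C)
              ((ihφ hφS _ ((hB.trans hBC).trans (Set.subset_insert _ _)) .pos).mpr axDeriv)
            simpa using removeAxPos hd
          · have hd := h2 _ (Set.subset_insert (axR .pos (α ψ)) C)
              ((ihψ hψS _ ((hB.trans hBC).trans (Set.subset_insert _ _)) .pos).mpr axDeriv)
            simpa using removeAxPos hd
        · rintro ⟨h1, h2⟩
          refine app3 (hBC (hB (SimRule.orEpos2 p hmem))) (h.mono hBC) ?_ ?_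
          · have hd := h1 _ (Set.subset_insert (axR .pos (α φ)) C)
              ((ihφ hφS _ ((hB.trans hBC).trans (Set.subset_insert _ _)) .pos).mpr axDeriv)
            simpa using removeAxPos hd
          · have hd := h2 _ (Set.subset_insert (axR .pos (α ψ)) C)
              ((ihψ hψS _ ((hB.trans hBC).trans (Set.subset_insert _ _)) .pos).mpr axDeriv)
            simpa using removeAxPos hd
    | neg =>
      show (Supp φ B .neg ∧ Supp ψ B .neg) ↔ _
      rw [ihφ hφS B hB .neg, ihψ hψS B hB .neg]
      constructor
      · rintro ⟨h1, h2⟩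
        exact app2 (hB (.orIneg hmem)) h1 h2
      · intro h
        exact ⟨app1 (hB (.orE1neg hmem)) h, app1 (hB (.orE2neg hmem)) h⟩
  | imp φ ψ ihφ ihψ =>
    intro hmem B hB s
    have hφS : φ ∈ S := hcl _ hmem (by simp [Form.subf, subf_self])
    have hψS : ψ ∈ S := hcl _ hmem (by simp [Form.subf, subf_self])
    cases s with
    | pos =>
      constructor
      · intro h
        have hax : AtDeriv (insert (axR .pos (α φ)) B) .pos ∅ ∅ (α φ) := axDeriv
        have hsφ : Supp φ (insert (axR .pos (α φ)) B) .pos :=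
          (ihφ hφS _ (hB.trans (Set.subset_insert _ _)) .pos).mpr hax
        have hsψ : Supp ψ (insert (axR .pos (α φ)) B) .pos :=
          h _ (Set.subset_insert _ _) hsφ
        have hd : AtDeriv B .pos (insert (α φ) ∅) ∅ (α ψ) :=
          removeAxPos ((ihψ hψS _ (hB.trans (Set.subset_insert _ _)) .pos).mp hsψ)
        refine app1 (hB (.impIpos hmem)) ?_
        simpa using hd
      · intro h C hBC hsφ
        have hdφ := (ihφ hφS C (hB.trans hBC) .pos).mp hsφ
        have := app2 (hBC (hB (.impEpos hmem))) (h.mono hBC) hdφ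
        exact (ihψ hψS C (hB.trans hBC) .pos).mpr this
    | neg =>
      show (Supp φ B .pos ∧ Supp ψ B .neg) ↔ _
      rw [ihφ hφS B hB .pos, ihψ hψS B hB .neg]
      constructor
      · rintro ⟨h1, h2⟩
        exact app2 (hB (.impIneg hmem)) h1 h2
      · intro h
        exact ⟨app1 (hB (.impE1neg hmem)) h, app1 (hB (.impE2neg hmem)) h⟩
  | coimp φ ψ ihφ ihψ =>
    intro hmem B hB s
    have hφS : φ ∈ S := hcl _ hmem (by simp [Form.subf, subf_self])
    have hψS : ψ ∈ S := hcl _ hmem (by simp [Form.subf, subf_self])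
    cases s with
    | pos =>
      show (Supp φ B .pos ∧ Supp ψ B .neg) ↔ _
      rw [ihφ hφS B hB .pos, ihψ hψS B hB .neg]
      constructor
      · rintro ⟨h1, h2⟩
        exact app2 (hB (.coimpIpos hmem)) h1 h2
      · intro h
        exact ⟨app1 (hB (.coimpE1pos hmem)) h, app1 (hB (.coimpE2pos hmem)) h⟩
    | neg =>
      constructor
      · intro h
        have hax : AtDeriv (insert (axR .neg (α ψ)) B) .neg ∅ ∅ (α ψ) := axDeriv
        have hsψ : Supp ψ (insert (axR .neg (α ψ)) B) .neg :=
          (ihψ hψS _ (hB.trans (Set.subset_insert _ _)) .neg).mpr hax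
        have hsφ : Supp φ (insert (axR .neg (α ψ)) B) .neg :=
          h _ (Set.subset_insert _ _) hsψ
        have hd : AtDeriv B .neg ∅ (insert (α ψ) ∅) (α φ) :=
          removeAxNeg ((ihφ hφS _ (hB.trans (Set.subset_insert _ _)) .neg).mp hsφ)
        refine app1 (hB (.coimpIneg hmem)) ?_
        simpa using hd
      · intro h C hBC hsψ
        have hdψ := (ihψ hψS C (hB.trans hBC) .neg).mp hsψ
        have := app2 (hBC (hB (.coimpEneg hmem))) (h.mono hBC) hdψ
        exact (ihφ hφS C (hB.trans hBC) .neg).mpr this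

theorem simulation_base_lemma (Γ : Set Form) (α : Form → ℕ)
    (hinj : Set.InjOn α (subSet Γ))
    (hatom : ∀ p : ℕ, Form.atom p ∈ subSet Γ → α (Form.atom p) = p)
    (φ : Form) (hφ : φ ∈ subSet Γ)
    (B : Base) (hB : simBase (subSet Γ) α ⊆ B) (s : Sign) :
    Supp φ B s ↔ AtDeriv B s ∅ ∅ (α φ) :=
  simulation_main (subSet Γ) α subSet_closed hatom φ hφ B hB s
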